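/- arXiv:2007.00078 — 2 statements merged into one kernel-verified Lean document; each statement's English description precedes it below -/
import Mathlib

section
/- There exists a constant c > 0 such that for all x ∈ ℝ, |x|^{2m} ⟨x⟩^{-2m-3} ≤ c·arctan(x)·x^{2m-1}·(1+x^{2m})^{-1/m-1} whenever x ≥ 0, and the function arctan(x)·x^{2m-1}·(1+x^{2m})^{-1/m-1} is nonnegative on all of ℝ. -/
open Real

lemma arctan_ge_half_self {x : ℝ} (h0 : 0 ≤ x) (h1 : x ≤ 1) :
    x / 2 ≤ Real.arctan x := by
  have key : MonotoneOn (fun y : ℝ => Real.arctan y - y / 2) (Set.Icc 0 1) := by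
    apply monotoneOn_of_deriv_nonneg (convex_Icc 0 1)
    · exact (Real.continuous_arctan.sub (continuous_id.div_const 2)).continuousOn
    · intro y hy
      exact (((Real.hasDerivAt_arctan y).sub
        ((hasDerivAt_id y).div_const 2)).differentiableAt).differentiableWithinAt
    · intro y hy
      rw [interior_Icc] at hy
      have hd : deriv (fun y : ℝ => Real.arctan y - y / 2) y = 1 / (1 + y ^ 2) - 1 / 2 := by
        have := (Real.hasDerivAt_arctan y).sub ((hasDerivAt_id y).div_const 2)
        exact this.deriv
      rw [hd, sub_nonneg, div_le_div_iff₀ (by norm_num) (by positivity)]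
      nlinarith [hy.1.le, hy.2.le]
  have h := key (Set.mem_Icc.2 ⟨le_refl 0, zero_le_one⟩) (Set.mem_Icc.2 ⟨h0, h1⟩) h0
  simp only [Real.arctan_zero] at h
  linarith

lemma arctan_ge_half {x : ℝ} (h1 : 1 ≤ x) : (1:ℝ) / 2 ≤ Real.arctan x := by
  have h2 : (1:ℝ)/2 ≤ Real.arctan 1 := by
    simpa using arctan_ge_half_self zero_le_one le_rfl
  exact h2.trans (Real.arctan_strictMono.monotone h1)

/-- There exists `c > 0` such that for `x ≥ 0`,
`|x|^{2m}⟨x⟩^{-2m-3} ≤ c · arctan(x) · x^{2m-1} · (1+x^{2m})^{-1/m-1}`, and the function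
`arctan(x) · x^{2m-1} · (1+x^{2m})^{-1/m-1}` is nonnegative on all of `ℝ`. -/
theorem weight_comparison (m : ℕ) (hm : 2 ≤ m) :
    ∃ c > 0,
      (∀ x : ℝ, 0 ≤ x →
        |x| ^ (2 * m) * (1 + x ^ 2) ^ ((-(2 * (m:ℝ)) - 3) / 2)
          ≤ c * (Real.arctan x * x ^ (2 * m - 1)
              * (1 + x ^ (2 * m)) ^ (-(1:ℝ) / m - 1))) ∧
      (∀ x : ℝ, 0 ≤ Real.arctan x * x ^ (2 * m - 1)
          * (1 + x ^ (2 * m)) ^ (-(1:ℝ) / m - 1)) := by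
  have hm0 : (0:ℝ) < m := by positivity
  refine ⟨8, by norm_num, ?_, ?_⟩
  · intro x hx
    rcases eq_or_lt_of_le hx with h0 | hx
    · subst h0
      simp [zero_pow (by omega : 2 * m ≠ 0), zero_pow (by omega : 2 * m - 1 ≠ 0)]
    · rw [abs_of_nonneg hx.le]
      set A : ℝ := 1 + x ^ 2 with hA
      set B : ℝ := 1 + x ^ (2 * m) with hB
      have hApos : (0:ℝ) < A := by positivity
      have hBpos : (0:ℝ) < B := by positivity
      set p : ℝ := (2 * (m:ℝ) + 3) / 2 with hp
      set q : ℝ := ((m:ℝ) + 1) / m with hq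
      have hep : (-(2 * (m:ℝ)) - 3) / 2 = -p := by rw [hp]; ring
      have heq : -(1:ℝ) / m - 1 = -q := by
        rw [hq]; field_simp; ring
      rw [hep, heq, Real.rpow_neg hApos.le, Real.rpow_neg hBpos.le]
      have hppos : (0:ℝ) < p := by rw [hp]; positivity
      have hqpos : (0:ℝ) < q := by rw [hq]; positivity
      have hApowpos : (0:ℝ) < A ^ p := Real.rpow_pos_of_pos hApos p
      have hBpowpos : (0:ℝ) < B ^ q := Real.rpow_pos_of_pos hBpos q
      have key : x ^ (2 * m) * B ^ q ≤ 8 * (Real.arctan x * x ^ (2 * m - 1)) * A ^ p := by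
        have hxsplit : x ^ (2 * m) = x ^ (2 * m - 1) * x := by
          rw [← pow_succ]; congr 1; omega
        have hxp1 : 0 ≤ x ^ (2 * m - 1) := pow_nonneg hx.le _
        rcases le_total x 1 with hx1 | hx1
        · -- case 0 < x ≤ 1
          have hB2 : B ≤ 2 := by
            have : x ^ (2 * m) ≤ 1 := pow_le_one₀ hx.le hx1
            rw [hB]; linarith
          have hq2 : q ≤ 2 := by
            rw [hq, div_le_iff₀ hm0]
            have : (1:ℝ) ≤ m := by exact_mod_cast Nat.one_le_iff_ne_zero.2 (by omega)
            linarith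
          have hBq : B ^ q ≤ 4 := by
            calc B ^ q ≤ (2:ℝ) ^ q := Real.rpow_le_rpow hBpos.le hB2 hqpos.le
            _ ≤ (2:ℝ) ^ (2:ℝ) := Real.rpow_le_rpow_of_exponent_le one_le_two hq2
            _ = 4 := by rw [show (2:ℝ) = ((2:ℕ):ℝ) from rfl, Real.rpow_natCast]; norm_num
          have hAp : (1:ℝ) ≤ A ^ p := Real.one_le_rpow (by rw [hA]; nlinarith) hppos.le
          have hat : x / 2 ≤ Real.arctan x := arctan_ge_half_self hx.le hx1
          have hatnn : 0 ≤ Real.arctan x := le_trans (by linarith) hat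
          calc x ^ (2 * m) * B ^ q ≤ x ^ (2 * m) * 4 := by
                exact mul_le_mul_of_nonneg_left hBq (pow_nonneg hx.le _)
            _ = 8 * ((x / 2) * x ^ (2 * m - 1)) := by rw [hxsplit]; ring
            _ ≤ 8 * (Real.arctan x * x ^ (2 * m - 1)) := by
                have := mul_le_mul_of_nonneg_right hat hxp1
                linarith
            _ ≤ 8 * (Real.arctan x * x ^ (2 * m - 1)) * A ^ p := by
                nlinarith [mul_nonneg hatnn hxp1]
        · -- case x ≥ 1
          have hat : (1:ℝ) / 2 ≤ Real.arctan x := arctan_ge_half hx1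
          have hx2m1 : (1:ℝ) ≤ x ^ (2 * m) := one_le_pow₀ hx1
          have hB2 : B ≤ 2 * x ^ (2 * m) := by rw [hB]; linarith
          have hBq : B ^ q ≤ 4 * x ^ (2 * m + 2) := by
            have h1 : B ^ q ≤ (2 * x ^ (2 * m)) ^ q :=
              Real.rpow_le_rpow hBpos.le hB2 hqpos.le
            have h2 : (2 * x ^ (2 * m)) ^ q = (2:ℝ) ^ q * x ^ ((2 * m : ℕ) * q) := by
              rw [Real.mul_rpow (by norm_num) (by positivity),
                ← Real.rpow_natCast x (2 * m), ← Real.rpow_mul hx.le]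
            have h3 : ((2 * m : ℕ) : ℝ) * q = ((2 * m + 2 : ℕ) : ℝ) := by
              rw [hq]; field_simp; push_cast; ring
            have hq2 : q ≤ 2 := by
              rw [hq, div_le_iff₀ hm0]
              have : (1:ℝ) ≤ m := by exact_mod_cast Nat.one_le_iff_ne_zero.2 (by omega)
              linarith
            have h4 : (2:ℝ) ^ q ≤ 4 := by
              calc (2:ℝ) ^ q ≤ (2:ℝ) ^ (2:ℝ) := Real.rpow_le_rpow_of_exponent_le one_le_two hq2
              _ = 4 := by rw [show (2:ℝ) = ((2:ℕ):ℝ) from rfl, Real.rpow_natCast]; norm_num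
            calc B ^ q ≤ (2:ℝ) ^ q * x ^ ((2 * m : ℕ) * q) := by rw [← h2]; exact h1
              _ = (2:ℝ) ^ q * x ^ (2 * m + 2 : ℕ) := by rw [h3, Real.rpow_natCast]
              _ ≤ 4 * x ^ (2 * m + 2) := by
                  exact mul_le_mul_of_nonneg_right h4 (pow_nonneg hx.le _)
          have hAp : x ^ (2 * m + 3 : ℕ) ≤ A ^ p := by
            have h1 : (x ^ 2 : ℝ) ^ p ≤ A ^ p :=
              Real.rpow_le_rpow (by positivity) (by rw [hA]; linarith) hppos.le
            have h2 : (x ^ 2 : ℝ) ^ p = x ^ (2 * m + 3 : ℕ) := by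
              rw [← Real.rpow_natCast x 2, ← Real.rpow_mul hx.le]
              rw [show ((2:ℕ):ℝ) * p = ((2 * m + 3 : ℕ) : ℝ) by rw [hp]; push_cast; ring,
                Real.rpow_natCast]
            rw [← h2]; exact h1
          have hexp : x ^ (2 * m) * x ^ (2 * m + 2) = x ^ (2 * m - 1) * x ^ (2 * m + 3 : ℕ) := by
            rw [← pow_add, ← pow_add]; congr 1; omega
          calc x ^ (2 * m) * B ^ q ≤ x ^ (2 * m) * (4 * x ^ (2 * m + 2)) :=
                mul_le_mul_of_nonneg_left hBq (pow_nonneg hx.le _)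
            _ = 4 * (x ^ (2 * m - 1) * x ^ (2 * m + 3 : ℕ)) := by
                rw [show x ^ (2 * m) * (4 * x ^ (2 * m + 2))
                  = 4 * (x ^ (2 * m) * x ^ (2 * m + 2)) by ring, hexp]
            _ ≤ 8 * (Real.arctan x * x ^ (2 * m - 1)) * A ^ p := by
                have hxp3 : (0:ℝ) ≤ x ^ (2 * m + 3 : ℕ) := pow_nonneg hx.le _
                have s1 : 4 * (x ^ (2 * m - 1) * x ^ (2 * m + 3 : ℕ))
                    ≤ 8 * (Real.arctan x * x ^ (2 * m - 1)) * x ^ (2 * m + 3 : ℕ) := by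
                  nlinarith [mul_le_mul_of_nonneg_right hat hxp1]
                have s2 : 8 * (Real.arctan x * x ^ (2 * m - 1)) * x ^ (2 * m + 3 : ℕ)
                    ≤ 8 * (Real.arctan x * x ^ (2 * m - 1)) * A ^ p := by
                  apply mul_le_mul_of_nonneg_left hAp
                  have : (0:ℝ) ≤ Real.arctan x := le_trans (by norm_num) hat
                  positivity
                linarith
      have hrhs : 8 * (Real.arctan x * x ^ (2 * m - 1) * (B ^ q)⁻¹)
          = (8 * (Real.arctan x * x ^ (2 * m - 1))) / B ^ q := by ring
      rw [hrhs, ← div_eq_mul_inv, div_le_div_iff₀ hApowpos hBpowpos]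
      calc x ^ (2 * m) * B ^ q ≤ 8 * (Real.arctan x * x ^ (2 * m - 1)) * A ^ p := key
        _ = 8 * (Real.arctan x * x ^ (2 * m - 1)) * A ^ p := rfl
  · intro x
    have hBpos : (0:ℝ) < 1 + x ^ (2 * m) := by
      have : (0:ℝ) ≤ x ^ (2 * m) := by
        have : x ^ (2 * m) = (x ^ m) ^ 2 := by rw [← pow_mul]; ring_nf
        rw [this]; positivity
      linarith
    have hrpow : (0:ℝ) < (1 + x ^ (2 * m)) ^ (-(1:ℝ) / m - 1) :=
      Real.rpow_pos_of_pos hBpos _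
    have hodd : Odd (2 * m - 1) := ⟨m - 1, by omega⟩
    have hsign : 0 ≤ Real.arctan x * x ^ (2 * m - 1) := by
      rcases le_total 0 x with h | h
      · have h1 : 0 ≤ Real.arctan x := by
          rw [← Real.arctan_zero]; exact Real.arctan_strictMono.monotone h
        exact mul_nonneg h1 (pow_nonneg h _)
      · have h1 : Real.arctan x ≤ 0 := by
          rw [← Real.arctan_zero]
          exact Real.arctan_strictMono.monotone h
        have h2 : x ^ (2 * m - 1) ≤ 0 := hodd.pow_nonpos h
        nlinarith [mul_nonneg (neg_nonneg.2 h1) (neg_nonneg.2 h2)]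
    exact mul_nonneg hsign hrpow.le
end

section
/- For any Schwartz function u on ℝ and any real η with |η| ≥ 1, ∫ (|∂ₓu|² + η² x^{2m} |u|²) dx ≥ c |η|^{2/(m+1)} ∫ |u|² dx, where c > 0 depends only on m (c is the bottom of the spectrum of -∂²ₓ + x^{2m}). -/
open MeasureTheory

/-- Derivative of the model logarithmic-derivative function `y ↦ 2εy/(1+y²)`. -/
lemma anharm_g_hasDerivAt (ε y : ℝ) :
    HasDerivAt (fun z : ℝ => 2 * ε * z / (1 + z ^ 2))
      (2 * ε * (1 - y ^ 2) / (1 + y ^ 2) ^ 2) y := by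
  have h : (1 : ℝ) + y ^ 2 ≠ 0 := by positivity
  have h1 : HasDerivAt (fun z : ℝ => 2 * ε * z) (2 * ε) y := by
    simpa using (hasDerivAt_id y).const_mul (2 * ε)
  have h2 : HasDerivAt (fun z : ℝ => 1 + z ^ 2) (2 * y) y := by
    simpa using (hasDerivAt_pow 2 y).const_add 1
  have := h1.div h2 h
  refine this.congr_deriv ?_
  field_simp
  ring

/-- Pointwise Riccati-type inequality for the model function. -/
lemma anharm_pointwise (m : ℕ) (hm : 2 ≤ m) (y : ℝ) :
    (1/2 : ℝ) ^ (m + 2) / 3 ≤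
      2 * (1/2 : ℝ) ^ (m + 2) * (1 - y ^ 2) / (1 + y ^ 2) ^ 2
        - (2 * (1/2 : ℝ) ^ (m + 2) * y / (1 + y ^ 2)) ^ 2 + y ^ (2 * m) := by
  set ε : ℝ := (1/2 : ℝ) ^ (m + 2) with hε
  have hε0 : 0 < ε := by positivity
  have hε16 : ε ≤ 1 / 16 := by
    calc ε ≤ (1/2 : ℝ) ^ 4 :=
          pow_le_pow_of_le_one (by norm_num) (by norm_num) (by omega)
    _ = 1 / 16 := by norm_num
  have hd : (0 : ℝ) < (1 + y ^ 2) ^ 2 := by positivity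
  have hg2 : (2 * ε * y / (1 + y ^ 2)) ^ 2 ≤ ε ^ 2 := by
    rw [div_pow, div_le_iff₀ hd]
    nlinarith [sq_nonneg (ε * (1 - y ^ 2))]
  have hεε : ε * ε ≤ ε * (1 / 16) := mul_le_mul_of_nonneg_left hε16 hε0.le
  by_cases hy : y ^ 2 ≤ 1 / 2
  · have hgd : 4 * ε / 9 ≤ 2 * ε * (1 - y ^ 2) / (1 + y ^ 2) ^ 2 := by
      rw [le_div_iff₀ hd]
      nlinarith [sq_nonneg y, mul_nonneg hε0.le (mul_nonneg (sub_nonneg.2 hy) (sq_nonneg y)),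
        mul_nonneg hε0.le (sub_nonneg.2 hy)]
    have hpow : 0 ≤ y ^ (2 * m) := (even_two_mul m).pow_nonneg y
    nlinarith [hgd, hg2, hpow]
  · push_neg at hy
    have hgd : -(ε / 2) ≤ 2 * ε * (1 - y ^ 2) / (1 + y ^ 2) ^ 2 := by
      rw [le_div_iff₀ hd]
      nlinarith [mul_nonneg hε0.le (sq_nonneg (y ^ 2 - 1))]
    have hpow : 4 * ε ≤ y ^ (2 * m) := by
      have h1 : ((1 : ℝ)/2) ^ m ≤ (y ^ 2) ^ m := pow_le_pow_left₀ (by norm_num) hy.le m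
      have h2 : y ^ (2 * m) = (y ^ 2) ^ m := by rw [pow_mul]
      have h3 : 4 * ε = (1/2 : ℝ) ^ m := by rw [hε, pow_add]; ring
      rw [h2, h3]; exact h1
    nlinarith [hgd, hg2, hpow]

/-- Rescaled anharmonic oscillator lower bound: for Schwartz `u` and `|η| ≥ 1`,
`∫ (|∂ₓu|² + η²x^{2m}|u|²) ≥ c |η|^{2/(m+1)} ∫ |u|²`. -/
theorem rescaled_anharmonic_bound (m : ℕ) (hm : 2 ≤ m) :
    ∃ c > (0:ℝ), ∀ (u : SchwartzMap ℝ ℝ) (η : ℝ), 1 ≤ |η| →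
      c * |η| ^ ((2:ℝ) / (m + 1)) * ∫ x : ℝ, (u x) ^ 2
        ≤ ∫ x : ℝ, (deriv (fun y : ℝ => u y) x) ^ 2 + η ^ 2 * x ^ (2 * m) * (u x) ^ 2 := by
  obtain ⟨ε, hεdef⟩ : ∃ ε : ℝ, ε = (1/2 : ℝ) ^ (m + 2) := ⟨_, rfl⟩
  have hε0 : 0 < ε := by rw [hεdef]; positivity
  refine ⟨ε / 3, div_pos hε0 (by norm_num), ?_⟩
  intro u η hη
  obtain ⟨u', hu'def⟩ : ∃ v : SchwartzMap ℝ ℝ, v = SchwartzMap.derivCLM ℝ ℝ u := ⟨_, rfl⟩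
  have hderiv_u : ∀ x : ℝ, deriv (fun y : ℝ => u y) x = u' x := fun x => by
    rw [hu'def]
    exact (SchwartzMap.derivCLM_apply ℝ (F := ℝ) u x).symm
  have hu_hasDeriv : ∀ x : ℝ, HasDerivAt u (u' x) x := fun x => by
    rw [hu'def, SchwartzMap.derivCLM_apply]
    exact u.differentiableAt.hasDerivAt
  obtain ⟨lam, hlamdef⟩ : ∃ l : ℝ, l = |η| ^ ((1:ℝ)/(m+1)) := ⟨_, rfl⟩
  have hη0 : (0:ℝ) < |η| := lt_of_lt_of_le one_pos hη
  have hlam1 : 1 ≤ lam := by rw [hlamdef]; exact Real.one_le_rpow hη (by positivity)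
  have hlam0 : 0 < lam := lt_of_lt_of_le one_pos hlam1
  have hm1 : ((m:ℝ) + 1) ≠ 0 := by positivity
  have hlampow : lam ^ (m + 1) = |η| := by
    rw [hlamdef, ← Real.rpow_natCast (|η| ^ ((1:ℝ)/(m+1))) (m+1),
      ← Real.rpow_mul (abs_nonneg η)]
    push_cast
    rw [one_div_mul_cancel hm1, Real.rpow_one]
  have hlam2 : lam ^ 2 = |η| ^ ((2:ℝ)/((m:ℝ)+1)) := by
    rw [hlamdef, ← Real.rpow_natCast (|η| ^ ((1:ℝ)/(m+1))) 2,
      ← Real.rpow_mul (abs_nonneg η)]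
    congr 1
    push_cast
    ring
  -- the conjugating weight and its derivative
  obtain ⟨w, hwdef⟩ : ∃ w : ℝ → ℝ,
      w = fun x => lam * (2 * ε * (lam * x) / (1 + (lam * x) ^ 2)) := ⟨_, rfl⟩
  obtain ⟨wd, hwddef⟩ : ∃ wd : ℝ → ℝ,
      wd = fun x => lam ^ 2 * (2 * ε * (1 - (lam * x) ^ 2) / (1 + (lam * x) ^ 2) ^ 2) := ⟨_, rfl⟩
  have hw_hasDeriv : ∀ x : ℝ, HasDerivAt w (wd x) x := by
    intro x
    have h1 : HasDerivAt (fun x : ℝ => lam * x) lam x := by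
      simpa using (hasDerivAt_id x).const_mul lam
    have h2 : HasDerivAt (fun x : ℝ => 2 * ε * (lam * x) / (1 + (lam * x) ^ 2))
        (2 * ε * (1 - (lam * x) ^ 2) / (1 + (lam * x) ^ 2) ^ 2 * lam) x :=
      (anharm_g_hasDerivAt ε (lam * x)).comp x h1
    have h3 := h2.const_mul lam
    rw [hwdef, hwddef]
    refine h3.congr_deriv ?_
    ring
  -- bounds on w and wd
  have hwb : ∀ x : ℝ, ‖w x‖ ≤ lam * ε := by
    intro x
    rw [hwdef]
    simp only []
    have h0 : (0:ℝ) < 1 + (lam * x) ^ 2 := by positivity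
    have hg : |2 * ε * (lam * x) / (1 + (lam * x) ^ 2)| ≤ ε := by
      rw [abs_div, abs_of_pos h0, div_le_iff₀ h0]
      have : |2 * ε * (lam * x)| = 2 * ε * |lam * x| := by
        rw [abs_mul, abs_of_nonneg (by positivity : (0:ℝ) ≤ 2 * ε)]
      rw [this]
      nlinarith [sq_nonneg (|lam * x| - 1), sq_abs (lam * x), hε0.le]
    calc ‖lam * (2 * ε * (lam * x) / (1 + (lam * x) ^ 2))‖
        = lam * |2 * ε * (lam * x) / (1 + (lam * x) ^ 2)| := by
          rw [Real.norm_eq_abs, abs_mul, abs_of_pos hlam0]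
      _ ≤ lam * ε := mul_le_mul_of_nonneg_left hg hlam0.le
  have hwdb : ∀ x : ℝ, ‖wd x‖ ≤ lam ^ 2 * (2 * ε) := by
    intro x
    rw [hwddef]
    simp only []
    have h0 : (0:ℝ) < (1 + (lam * x) ^ 2) ^ 2 := by positivity
    have hg : |2 * ε * (1 - (lam * x) ^ 2) / (1 + (lam * x) ^ 2) ^ 2| ≤ 2 * ε := by
      rw [abs_div, abs_of_pos h0, div_le_iff₀ h0]
      have h1 : |2 * ε * (1 - (lam * x) ^ 2)| = 2 * ε * |1 - (lam * x) ^ 2| := by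
        rw [abs_mul, abs_of_nonneg (by positivity : (0:ℝ) ≤ 2 * ε)]
      have h2 : |1 - (lam * x) ^ 2| ≤ (1 + (lam * x) ^ 2) ^ 2 := by
        rw [abs_le]
        constructor <;> nlinarith [sq_nonneg (lam * x), sq_nonneg ((lam * x) ^ 2)]
      rw [h1]
      nlinarith [hε0.le]
    calc ‖lam ^ 2 * (2 * ε * (1 - (lam * x) ^ 2) / (1 + (lam * x) ^ 2) ^ 2)‖
        = lam ^ 2 * |2 * ε * (1 - (lam * x) ^ 2) / (1 + (lam * x) ^ 2) ^ 2| := by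
          rw [Real.norm_eq_abs, abs_mul, abs_of_pos (pow_pos hlam0 2)]
      _ ≤ lam ^ 2 * (2 * ε) := mul_le_mul_of_nonneg_left hg (sq_nonneg lam)
  have hwc : Continuous w := by
    have := fun x => (hw_hasDeriv x).continuousAt
    exact continuous_iff_continuousAt.2 this
  have hwdc : Continuous wd := by
    rw [hwddef]
    have hc1 : Continuous fun x : ℝ => lam * x := continuous_const.mul continuous_id
    have hnum : Continuous fun x : ℝ => 2 * ε * (1 - (lam * x) ^ 2) :=
      continuous_const.mul (continuous_const.sub (hc1.pow 2))
    have hden : Continuous fun x : ℝ => (1 + (lam * x) ^ 2) ^ 2 :=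
      (continuous_const.add (hc1.pow 2)).pow 2
    exact continuous_const.mul (hnum.div hden fun x => by positivity)
  -- integrability facts
  have hCu : ∃ C, ∀ x, ‖u x‖ ≤ C :=
    ⟨SchwartzMap.seminorm ℝ 0 0 u, fun x => SchwartzMap.norm_le_seminorm ℝ u x⟩
  have hCu' : ∃ C, ∀ x, ‖u' x‖ ≤ C :=
    ⟨SchwartzMap.seminorm ℝ 0 0 u', fun x => SchwartzMap.norm_le_seminorm ℝ u' x⟩
  have hu2 : Integrable (fun x => u x ^ 2) := by
    simpa [pow_two] using
      Integrable.bdd_mul u.integrable u.continuous.aestronglyMeasurable (ae_of_all _ hCu.choose_spec)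
  have hu'2 : Integrable (fun x => u' x ^ 2) := by
    simpa [pow_two] using
      Integrable.bdd_mul u'.integrable u'.continuous.aestronglyMeasurable (ae_of_all _ hCu'.choose_spec)
  have huu' : Integrable (fun x => u x * u' x) :=
    Integrable.bdd_mul u'.integrable u.continuous.aestronglyMeasurable (ae_of_all _ hCu.choose_spec)
  have hx2m : Integrable (fun x : ℝ => x ^ (2 * m) * u x ^ 2) := by
    have hint := (u.integrable_pow_mul (volume) (2 * m)).const_mul
      (SchwartzMap.seminorm ℝ 0 0 u)
    refine hint.mono' ?_ (ae_of_all _ fun x => ?_)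
    · exact ((continuous_pow (2 * m)).mul (u.continuous.pow 2)).aestronglyMeasurable
    · have hb : ‖u x‖ ≤ SchwartzMap.seminorm ℝ 0 0 u := SchwartzMap.norm_le_seminorm ℝ u x
      have hb0 : (0:ℝ) ≤ ‖x‖ ^ (2 * m) * ‖u x‖ := by positivity
      calc ‖x ^ (2 * m) * u x ^ 2‖ = ‖u x‖ * (‖x‖ ^ (2 * m) * ‖u x‖) := by
            rw [norm_mul, norm_pow, norm_pow]; ring
        _ ≤ SchwartzMap.seminorm ℝ 0 0 u * (‖x‖ ^ (2 * m) * ‖u x‖) :=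
            mul_le_mul_of_nonneg_right hb hb0
  -- the three integrands
  obtain ⟨F, hFdef⟩ : ∃ F : ℝ → ℝ,
      F = fun x => u' x ^ 2 + η ^ 2 * x ^ (2 * m) * u x ^ 2 := ⟨_, rfl⟩
  obtain ⟨D, hDdef⟩ : ∃ D : ℝ → ℝ,
      D = fun x => wd x * u x ^ 2 + w x * (2 * u x * u' x) := ⟨_, rfl⟩
  have hF : Integrable F := by
    rw [hFdef]

    refine hu'2.add ?_
    have := hx2m.const_mul (η ^ 2)
    simpa [mul_assoc] using this
  have hD : Integrable D := by
    rw [hDdef]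
    refine (Integrable.bdd_mul hu2 hwdc.aestronglyMeasurable
        (ae_of_all _ hwdb)).add ?_
    have h2 : Integrable (fun x => 2 * (u x * u' x)) := huu'.const_mul 2
    have := Integrable.bdd_mul h2 hwc.aestronglyMeasurable (ae_of_all _ hwb)
    simpa [mul_assoc, mul_comm, mul_left_comm] using this
  have hφ : Integrable (fun x => w x * u x ^ 2) :=
    Integrable.bdd_mul hu2 hwc.aestronglyMeasurable (ae_of_all _ hwb)
  have hφ' : ∀ x : ℝ, HasDerivAt (fun x => w x * u x ^ 2) (D x) x := by
    intro x
    have h2 : HasDerivAt (fun y : ℝ => u y ^ 2) (2 * u x * u' x) x := by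
      have := (hu_hasDeriv x).pow 2
      refine this.congr_deriv ?_
      push_cast
      ring
    have := (hw_hasDeriv x).mul h2
    simp only [hDdef]
    exact this
  have hintD : ∫ x, D x = 0 :=
    integral_eq_zero_of_hasDerivAt_of_integrable hφ' hD hφ
  -- pointwise lower bound for F + D
  have key : ∀ x : ℝ, (ε / 3 * lam ^ 2) * u x ^ 2 ≤ F x + D x := by
    intro x
    have hpt := anharm_pointwise m hm (lam * x)
    have hscale : η ^ 2 * x ^ (2 * m) = lam ^ 2 * (lam * x) ^ (2 * m) := by
      have h1 : η ^ 2 = (lam ^ (m + 1)) ^ 2 := by rw [hlampow, sq_abs]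
      rw [h1, mul_pow]
      ring
    have hco : ε / 3 * lam ^ 2 ≤ wd x - w x ^ 2 + η ^ 2 * x ^ (2 * m) := by
      rw [hscale]
      have hmul := mul_le_mul_of_nonneg_left hpt (sq_nonneg lam)
      calc ε / 3 * lam ^ 2 = lam ^ 2 * ((1/2 : ℝ) ^ (m + 2) / 3) := by rw [hεdef]; ring
        _ ≤ lam ^ 2 * (2 * (1/2 : ℝ) ^ (m + 2) * (1 - (lam * x) ^ 2) / (1 + (lam * x) ^ 2) ^ 2
              - (2 * (1/2 : ℝ) ^ (m + 2) * (lam * x) / (1 + (lam * x) ^ 2)) ^ 2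
              + (lam * x) ^ (2 * m)) := hmul
        _ = wd x - w x ^ 2 + lam ^ 2 * (lam * x) ^ (2 * m) := by
            simp only [hwdef, hwddef, hεdef]
            ring
    have hiden : F x + D x
        = (u' x + w x * u x) ^ 2 + (wd x - w x ^ 2 + η ^ 2 * x ^ (2 * m)) * u x ^ 2 := by
      simp only [hFdef, hDdef]
      ring
    calc (ε / 3 * lam ^ 2) * u x ^ 2
        ≤ (wd x - w x ^ 2 + η ^ 2 * x ^ (2 * m)) * u x ^ 2 :=
          mul_le_mul_of_nonneg_right hco (sq_nonneg _)
      _ ≤ (u' x + w x * u x) ^ 2 + (wd x - w x ^ 2 + η ^ 2 * x ^ (2 * m)) * u x ^ 2 :=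
          le_add_of_nonneg_left (sq_nonneg _)
      _ = F x + D x := hiden.symm
  have h1 : ∫ x, (ε / 3 * lam ^ 2) * u x ^ 2 ≤ ∫ x, (F x + D x) :=
    integral_mono (hu2.const_mul _) (hF.add hD) key
  have h2 : ∫ x, (F x + D x) = ∫ x, F x := by
    rw [integral_add hF hD, hintD, add_zero]
  calc ε / 3 * |η| ^ ((2:ℝ) / (m + 1)) * ∫ x : ℝ, (u x) ^ 2
      = (ε / 3 * lam ^ 2) * ∫ x : ℝ, (u x) ^ 2 := by rw [hlam2]
    _ = ∫ x : ℝ, (ε / 3 * lam ^ 2) * u x ^ 2 := (integral_const_mul _ _).symm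
    _ ≤ ∫ x, (F x + D x) := h1
    _ = ∫ x, F x := h2
    _ = ∫ x : ℝ, (deriv (fun y : ℝ => u y) x) ^ 2 + η ^ 2 * x ^ (2 * m) * (u x) ^ 2 := by
        congr 1
        funext x
        simp only [hFdef]
        rw [hderiv_u x]
end
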